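/- arXiv:2404.17898 — 3 statements merged into one kernel-verified Lean document; each statement's English description precedes it below -/
import Mathlib

section
/- Let A : ℝ → ℝ be convex and even with A(0) = 0, differentiable on [0,∞) with derivative a = A'. Then for every t ≥ 0 and every s ∈ ℝ one has s·a(t) − A(s) ≤ A(2t); equivalently, the conjugate function Ã satisfies Ã(a(t)) ≤ A(2t) for all t ≥ 0. -/
/-- Lemma (conjugate bound a): if `A` is convex, even, `A(0) = 0` and `A` is
differentiable on `[0,∞)` with derivative `a`, then for every `t ≥ 0` and
every `s ∈ ℝ`, `s·a(t) − A(s) ≤ A(2t)`; i.e. `Ã(a(t)) ≤ A(2t)`. -/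
theorem conjugate_deriv_bound (A a : ℝ → ℝ)
    (hA_convex : ConvexOn ℝ Set.univ A)
    (hA_even : ∀ s : ℝ, A (-s) = A s)
    (hA_zero : A 0 = 0)
    (hA_diff : ∀ t : ℝ, 0 ≤ t → HasDerivWithinAt A (a t) (Set.Ici 0) t) :
    ∀ t : ℝ, 0 ≤ t → ∀ s : ℝ, s * a t - A s ≤ A (2 * t) := by
  have hC : ConvexOn ℝ (Set.Ici (0:ℝ)) A :=
    hA_convex.subset (Set.subset_univ _) (convex_Ici 0)
  -- A is nonnegative
  have hA_nonneg : ∀ s : ℝ, 0 ≤ A s := by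
    intro s
    have h := hA_convex.2 (Set.mem_univ s) (Set.mem_univ (-s))
      (by norm_num : (0:ℝ) ≤ 1/2) (by norm_num : (0:ℝ) ≤ 1/2) (by norm_num)
    simp only [smul_eq_mul] at h
    have hmid : (1/2 : ℝ) * s + (1/2 : ℝ) * (-s) = 0 := by ring
    rw [hmid, hA_zero, hA_even] at h
    linarith [h]
  -- subgradient inequality on [0,∞)
  have key : ∀ t : ℝ, 0 ≤ t → ∀ y : ℝ, 0 ≤ y → a t * (y - t) ≤ A y - A t := by
    intro t ht y hy
    rcases lt_trichotomy t y with h | h | h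
    · have := hC.le_slope_of_hasDerivWithinAt ht hy h (hA_diff t ht)
      rw [slope_def_field] at this
      have hyt : 0 < y - t := by linarith
      calc a t * (y - t) ≤ (A y - A t) / (y - t) * (y - t) := by
            exact mul_le_mul_of_nonneg_right this hyt.le
        _ = A y - A t := by field_simp
    · simp [h]
    · have := hC.slope_le_of_hasDerivWithinAt hy ht h (hA_diff t ht)
      rw [slope_def_field] at this
      have hty : 0 < t - y := by linarith
      have := mul_le_mul_of_nonneg_right this hty.le
      rw [div_mul_cancel₀ _ hty.ne'] at this
      nlinarith
  -- a t ≥ 0 for t ≥ 0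
  have ha_nonneg : ∀ t : ℝ, 0 ≤ t → 0 ≤ a t := by
    intro t ht
    rcases eq_or_lt_of_le ht with h | h
    · have hd := hasDerivWithinAt_iff_tendsto_slope.mp (hA_diff t ht)
      haveI hne : (nhdsWithin t (Set.Ici 0 \ {t})).NeBot := by
        rw [← h]
        have : Set.Ici (0:ℝ) \ {0} = Set.Ioi 0 := by
          ext x
          simp [Set.mem_diff, lt_iff_le_and_ne, eq_comm, and_comm]
        rw [this]
        exact nhdsGT_neBot 0
      refine ge_of_tendsto hd ?_
      filter_upwards [self_mem_nhdsWithin] with y hy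
      obtain ⟨hy0, hyt⟩ := hy
      rw [slope_def_field]
      have hyt' : y ≠ t := hyt
      rcases lt_or_gt_of_ne hyt' with hlt | hgt
      · exfalso; rw [← h] at hlt; exact absurd hy0 (not_le.mpr hlt)
      · have : 0 < y - t := by linarith
        apply div_nonneg _ this.le
        rw [← h, hA_zero]; simpa using hA_nonneg y
    · have := hC.le_slope_of_hasDerivWithinAt (le_refl (0:ℝ)) ht h (hA_diff 0 le_rfl)
      rw [slope_def_field, hA_zero] at this
      -- slope A 0 t ≤ a t would be better; instead use a 0 ≤ slope... we need lower bound on a t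
      have h2 := hC.slope_le_of_hasDerivWithinAt (le_refl (0:ℝ)) ht h (hA_diff t ht)
      rw [slope_def_field, hA_zero] at h2
      have : (0:ℝ) ≤ (A t - 0) / (t - 0) := by
        rw [sub_zero, sub_zero]
        exact div_nonneg (hA_nonneg t) h.le
      linarith
  -- main bound for s ≥ 0
  have main : ∀ t : ℝ, 0 ≤ t → ∀ s : ℝ, 0 ≤ s → s * a t - A s ≤ A (2 * t) := by
    intro t ht s hs
    have h1 := key t ht s hs
    have h2 := key t ht (2 * t) (by linarith)
    have h3 := hA_nonneg t
    nlinarith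
  intro t ht s
  rcases le_or_gt 0 s with hs | hs
  · exact main t ht s hs
  · have h1 := main t ht (-s) (by linarith)
    rw [hA_even] at h1
    have : s * a t ≤ (-s) * a t := by
      have := ha_nonneg t ht
      nlinarith
    linarith
end

section
/- For every real p ≥ 2 and all vectors w₁, w₂ ∈ ℝ^N, one has ⟨|w₁|^{p−2}·w₁ − |w₂|^{p−2}·w₂, w₁ − w₂⟩ ≥ (1/(p·2^{p−3}))·|w₁ − w₂|^p, where ⟨·,·⟩ is the Euclidean inner product and |·| the Euclidean norm. -/
open RealInnerProductSpace

private lemma rpow_superadd {q a b : ℝ} (hq : 1 ≤ q) (ha : 0 ≤ a) (hb : 0 ≤ b) :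
    a ^ q + b ^ q ≤ (a + b) ^ q := by
  have h := NNReal.add_rpow_le_rpow_add a.toNNReal b.toNNReal hq
  have h2 := NNReal.coe_le_coe.2 h
  simpa [NNReal.coe_rpow, ← Real.toNNReal_add ha hb, Real.coe_toNNReal _ ha,
    Real.coe_toNNReal _ hb, Real.coe_toNNReal _ (add_nonneg ha hb)] using h2

private lemma rpow_pred_mul {x q : ℝ} (_hx : 0 ≤ x) (hq : q ≠ 0) :
    x ^ (q - 1) * x = x ^ q := by
  rcases eq_or_ne x 0 with h | h
  · simp [h, Real.zero_rpow hq]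
  · rw [← Real.rpow_add_one h]
    congr 1
    ring

/-- Endpoint inequality E1. -/
private lemma E1 {p x y : ℝ} (hp : 2 ≤ p) (hy : 0 ≤ y) (hxy : y ≤ x) :
    (1 / (p * (2:ℝ) ^ (p - 3))) * (x - y) ^ p ≤
      (x - y) * (x ^ (p - 2) * x - y ^ (p - 2) * y) := by
  have hx : 0 ≤ x := hy.trans hxy
  have ht : 0 ≤ x - y := sub_nonneg.2 hxy
  have hp0 : (0:ℝ) < p := by linarith
  have h2 : (0:ℝ) < (2:ℝ) ^ (p - 3) := Real.rpow_pos_of_pos (by norm_num) _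
  have hc1 : 1 / (p * (2:ℝ) ^ (p - 3)) ≤ 1 := by
    rw [div_le_one (by positivity)]
    have : (1:ℝ)/2 ≤ (2:ℝ) ^ (p - 3) := by
      calc (1:ℝ)/2 = (2:ℝ) ^ (-1 : ℝ) := by
            rw [Real.rpow_neg_one]; norm_num
        _ ≤ (2:ℝ) ^ (p - 3) := by
            apply Real.rpow_le_rpow_left_iff (x := (2:ℝ)) (by norm_num) |>.2
            linarith
    nlinarith
  have hsup : (x - y) ^ (p - 1) + y ^ (p - 1) ≤ x ^ (p - 1) := by
    have := rpow_superadd (q := p - 1) (by linarith) ht hy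
    simpa using this
  have hxp1 : x ^ (p - 2) * x = x ^ (p - 1) := by
    rw [show p - 2 = (p - 1) - 1 by ring]; exact rpow_pred_mul hx (by linarith)
  have hyp1 : y ^ (p - 2) * y = y ^ (p - 1) := by
    rw [show p - 2 = (p - 1) - 1 by ring]; exact rpow_pred_mul hy (by linarith)
  have htp : (x - y) ^ (p - 1) * (x - y) = (x - y) ^ p := rpow_pred_mul ht (by linarith)
  have hpos : (0:ℝ) ≤ (x - y) ^ p := Real.rpow_nonneg ht _
  calc (1 / (p * (2:ℝ) ^ (p - 3))) * (x - y) ^ p ≤ 1 * (x - y) ^ p := by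
        apply mul_le_mul_of_nonneg_right hc1 hpos
    _ = (x - y) ^ (p - 1) * (x - y) := by rw [one_mul, htp]
    _ ≤ (x ^ (p - 1) - y ^ (p - 1)) * (x - y) := by
        apply mul_le_mul_of_nonneg_right _ ht
        linarith
    _ = (x - y) * (x ^ (p - 2) * x - y ^ (p - 2) * y) := by rw [hxp1, hyp1]; ring

/-- Endpoint inequality E2. -/
private lemma E2 {p x y : ℝ} (hp : 2 ≤ p) (hy : 0 ≤ y) (hx : 0 ≤ x) :
    (1 / (p * (2:ℝ) ^ (p - 3))) * (x + y) ^ p ≤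
      (x + y) * (x ^ (p - 2) * x + y ^ (p - 2) * y) := by
  have hp0 : (0:ℝ) < p := by linarith
  have h2 : (0:ℝ) < (2:ℝ) ^ (p - 3) := Real.rpow_pos_of_pos (by norm_num) _
  have hxp1 : x ^ (p - 2) * x = x ^ (p - 1) := by
    rw [show p - 2 = (p - 1) - 1 by ring]; exact rpow_pred_mul hx (by linarith)
  have hyp1 : y ^ (p - 2) * y = y ^ (p - 1) := by
    rw [show p - 2 = (p - 1) - 1 by ring]; exact rpow_pred_mul hy (by linarith)
  -- power mean: (x+y)^(p-1) ≤ 2^(p-2) * (x^(p-1)+y^(p-1))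
  have hconv := (convexOn_rpow (p := p - 1) (by linarith)).2
    (Set.mem_Ici.2 hx) (Set.mem_Ici.2 hy)
    (by norm_num : (0:ℝ) ≤ 1/2) (by norm_num : (0:ℝ) ≤ 1/2) (by norm_num)
  simp only [smul_eq_mul] at hconv
  have hmid : ((x + y)/2) ^ (p - 1) ≤ (x ^ (p - 1) + y ^ (p - 1)) / 2 := by
    have : (1:ℝ)/2 * x + 1/2 * y = (x + y)/2 := by ring
    rw [this] at hconv
    linarith
  have hsplit : (x + y) ^ (p - 1) = 2 ^ (p - 1) * ((x + y)/2) ^ (p - 1) := by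
    rw [← Real.mul_rpow (by norm_num) (by positivity)]
    ring_nf
  have h2p1 : (0:ℝ) < (2:ℝ) ^ (p - 1 : ℝ) := Real.rpow_pos_of_pos (by norm_num) _
  have hpm : (x + y) ^ (p - 1) ≤ 2 ^ (p - 2) * (x ^ (p - 1) + y ^ (p - 1)) := by
    have h22 : (2:ℝ) ^ (p - 1 : ℝ) = 2 ^ (p - 2 : ℝ) * 2 := by
      rw [show (p - 1 : ℝ) = (p - 2) + 1 by ring, Real.rpow_add_one (by norm_num)]
    calc (x + y) ^ (p - 1) = 2 ^ (p - 1 : ℝ) * ((x + y)/2) ^ (p - 1) := hsplit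
      _ ≤ 2 ^ (p - 1 : ℝ) * ((x ^ (p - 1) + y ^ (p - 1)) / 2) :=
          mul_le_mul_of_nonneg_left hmid h2p1.le
      _ = 2 ^ (p - 2 : ℝ) * (x ^ (p - 1) + y ^ (p - 1)) := by rw [h22]; ring
  have hc2 : (1 / (p * (2:ℝ) ^ (p - 3))) * 2 ^ (p - 2 : ℝ) = 2 / p := by
    have h23 : (2:ℝ) ^ (p - 2 : ℝ) = 2 ^ (p - 3 : ℝ) * 2 := by
      rw [show (p - 2 : ℝ) = (p - 3) + 1 by ring, Real.rpow_add_one (by norm_num)]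
    rw [h23]; field_simp
  have htp : (x + y) ^ (p - 1) * (x + y) = (x + y) ^ p :=
    rpow_pred_mul (by linarith) (by linarith)
  have hX : (0:ℝ) ≤ x ^ (p - 1) := Real.rpow_nonneg hx _
  have hY : (0:ℝ) ≤ y ^ (p - 1) := Real.rpow_nonneg hy _
  have hc : (0:ℝ) < 1 / (p * (2:ℝ) ^ (p - 3)) := by positivity
  calc (1 / (p * (2:ℝ) ^ (p - 3))) * (x + y) ^ p
      = (1 / (p * (2:ℝ) ^ (p - 3))) * ((x + y) ^ (p - 1) * (x + y)) := by rw [htp]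
    _ ≤ (1 / (p * (2:ℝ) ^ (p - 3))) * ((2 ^ (p - 2 : ℝ) * (x ^ (p - 1) + y ^ (p - 1))) * (x + y)) := by
        apply mul_le_mul_of_nonneg_left _ hc.le
        apply mul_le_mul_of_nonneg_right hpm (by linarith)
    _ = (2 / p) * ((x ^ (p - 1) + y ^ (p - 1)) * (x + y)) := by
        rw [← hc2]; ring
    _ ≤ 1 * ((x ^ (p - 1) + y ^ (p - 1)) * (x + y)) := by
        apply mul_le_mul_of_nonneg_right _ (by positivity)
        rw [div_le_one hp0]; linarith
    _ = (x + y) * (x ^ (p - 2) * x + y ^ (p - 2) * y) := by rw [hxp1, hyp1]; ring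

/-- Scalar core inequality, assuming `y ≤ x`. -/
private lemma keyAux {p x y d : ℝ} (hp : 2 ≤ p) (hy : 0 ≤ y) (hxy : y ≤ x)
    (hd0 : 0 ≤ d) (hd1 : x - y ≤ d) (hd2 : d ≤ x + y) :
    (1 / (p * (2:ℝ) ^ (p - 3))) * d ^ p ≤
      (x ^ (p - 2) - y ^ (p - 2)) * (x ^ 2 - y ^ 2) / 2
        + (x ^ (p - 2) + y ^ (p - 2)) * d ^ 2 / 2 := by
  have hx : 0 ≤ x := hy.trans hxy
  set c : ℝ := 1 / (p * (2:ℝ) ^ (p - 3)) with hcdef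
  have hc : (0:ℝ) < c := by
    have : (0:ℝ) < (2:ℝ) ^ (p - 3) := Real.rpow_pos_of_pos (by norm_num) _
    positivity
  set u₀ : ℝ := (x - y) ^ 2 with hu₀
  set u₁ : ℝ := (x + y) ^ 2 with hu₁
  have hle0 : u₀ ≤ d ^ 2 := by nlinarith
  have hle1 : d ^ 2 ≤ u₁ := by nlinarith
  -- rpow facts: d ^ p = (d^2) ^ (p/2), etc.
  have sq_rpow : ∀ t : ℝ, 0 ≤ t → (t ^ 2) ^ (p / 2 : ℝ) = t ^ p := by
    intro t ht
    rw [← Real.rpow_natCast t 2, ← Real.rpow_mul ht]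
    congr 1
    push_cast
    ring
  have hE1 := E1 hp hy hxy
  have hE2 := E2 hp hy hx
  rw [← hcdef] at hE1 hE2
  rcases eq_or_lt_of_le (hle0.trans hle1) with h | h
  · -- u₀ = u₁, so d² = u₀ and d = x - y
    have hdu : d ^ 2 = u₀ := le_antisymm (h ▸ hle1) hle0
    have hfac : (d - (x - y)) * (d + (x - y)) = 0 := by
      rw [hu₀] at hdu
      linear_combination hdu
    have hd : d = x - y := by
      rcases mul_eq_zero.1 hfac with h' | h'
      · linarith
      · linarith
    rw [hd]
    nlinarith [hE1]
  · set s : ℝ := u₁ - u₀ with hs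
    have hspos : 0 < s := by simp only [hs]; linarith
    set a : ℝ := (u₁ - d ^ 2) / s with ha
    set b : ℝ := (d ^ 2 - u₀) / s with hb
    have ha0 : 0 ≤ a := div_nonneg (by linarith) hspos.le
    have hb0 : 0 ≤ b := div_nonneg (by linarith) hspos.le
    have hab : a + b = 1 := by
      rw [ha, hb, ← add_div, div_eq_one_iff_eq hspos.ne', hs]; ring
    have hdu : d ^ 2 = a * u₀ + b * u₁ := by
      rw [ha, hb, div_mul_eq_mul_div, div_mul_eq_mul_div, ← add_div, eq_div_iff hspos.ne', hs]
      ring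
    have hu₀0 : (0:ℝ) ≤ u₀ := sq_nonneg _
    have hu₁0 : (0:ℝ) ≤ u₁ := sq_nonneg _
    have hconv := (convexOn_rpow (p := p / 2) (by linarith)).2
      (Set.mem_Ici.2 hu₀0) (Set.mem_Ici.2 hu₁0) ha0 hb0 hab
    simp only [smul_eq_mul] at hconv
    have hdp : d ^ p ≤ a * (x - y) ^ p + b * (x + y) ^ p := by
      have h1 : d ^ p = (d ^ 2) ^ (p / 2 : ℝ) := (sq_rpow d hd0).symm
      rw [h1, hdu]
      calc (a * u₀ + b * u₁) ^ (p / 2 : ℝ) ≤ a * u₀ ^ (p / 2 : ℝ) + b * u₁ ^ (p / 2 : ℝ) := hconv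
        _ = a * (x - y) ^ p + b * (x + y) ^ p := by
            rw [hu₀, hu₁, sq_rpow _ (by linarith), sq_rpow _ (by linarith)]
    calc c * d ^ p ≤ c * (a * (x - y) ^ p + b * (x + y) ^ p) :=
          mul_le_mul_of_nonneg_left hdp hc.le
      _ = a * (c * (x - y) ^ p) + b * (c * (x + y) ^ p) := by ring
      _ ≤ a * ((x - y) * (x ^ (p - 2) * x - y ^ (p - 2) * y))
            + b * ((x + y) * (x ^ (p - 2) * x + y ^ (p - 2) * y)) := by
          gcongr
      _ = (x ^ (p - 2) - y ^ (p - 2)) * (x ^ 2 - y ^ 2) / 2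
            + (x ^ (p - 2) + y ^ (p - 2)) * d ^ 2 / 2 := by
          have hb1 : b = 1 - a := by linarith
          rw [hdu, hb1, hu₀, hu₁]
          ring

/-- Symmetric scalar core inequality. -/
private lemma key {p x y d : ℝ} (hp : 2 ≤ p) (hx : 0 ≤ x) (hy : 0 ≤ y)
    (hd1 : |x - y| ≤ d) (hd2 : d ≤ x + y) :
    (1 / (p * (2:ℝ) ^ (p - 3))) * d ^ p ≤
      (x ^ (p - 2) - y ^ (p - 2)) * (x ^ 2 - y ^ 2) / 2
        + (x ^ (p - 2) + y ^ (p - 2)) * d ^ 2 / 2 := by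
  have hd0 : 0 ≤ d := (abs_nonneg _).trans hd1
  rcases le_total y x with h | h
  · exact keyAux hp hy h hd0 (by rw [abs_of_nonneg (by linarith)] at hd1; exact hd1) hd2
  · have := keyAux hp hx h hd0
      (by rw [abs_sub_comm, abs_of_nonneg (by linarith)] at hd1; exact hd1)
      (by linarith)
    linarith [this]

/-- Simon's monotonicity inequality for the `p`-Laplacian vector field
`w ↦ |w₁|^{p−2}w` on `ℝ^N`, for `p ≥ 2`:
`⟨|w₁|^{p−2}w₁ − |w₂|^{p−2}w₂, w₁ − w₂⟩ ≥ (1/(p·2^{p−3}))·|w₁ − w₂|^p`. -/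
theorem simon_inequality (N : ℕ) (p : ℝ) (hp : 2 ≤ p)
    (w₁ w₂ : EuclideanSpace ℝ (Fin N)) :
    (1 / (p * (2:ℝ) ^ (p - 3))) * ‖w₁ - w₂‖ ^ p ≤
      ⟪‖w₁‖ ^ (p - 2) • w₁ - ‖w₂‖ ^ (p - 2) • w₂, w₁ - w₂⟫ := by
  set x := ‖w₁‖
  set y := ‖w₂‖
  set d := ‖w₁ - w₂‖
  have hx : 0 ≤ x := norm_nonneg _
  have hy : 0 ≤ y := norm_nonneg _
  have hd1 : |x - y| ≤ d := abs_norm_sub_norm_le _ _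
  have hd2 : d ≤ x + y := norm_sub_le _ _
  have hexp : ⟪x ^ (p - 2) • w₁ - y ^ (p - 2) • w₂, w₁ - w₂⟫
      = x ^ (p - 2) * x ^ 2 + y ^ (p - 2) * y ^ 2
        - (x ^ (p - 2) + y ^ (p - 2)) * ⟪w₁, w₂⟫ := by
    simp only [inner_sub_left, inner_sub_right, real_inner_smul_left,
      real_inner_self_eq_norm_sq, real_inner_comm w₂ w₁]
    ring
  have hnorm : d ^ 2 = x ^ 2 - 2 * ⟪w₁, w₂⟫ + y ^ 2 := norm_sub_sq_real w₁ w₂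
  have hk := key hp hx hy hd1 hd2
  rw [hexp]
  have hinner : ⟪w₁, w₂⟫ = (x ^ 2 + y ^ 2 - d ^ 2) / 2 := by linarith
  rw [hinner]
  nlinarith [hk]
end

section
/- For all vectors a, b ∈ ℝ^N one has e^{|a|²} − e^{|b|²} − 2e^{|b|²}·⟨b, a − b⟩ ≥ |a − b|², where ⟨·,·⟩ is the Euclidean inner product and |·| the Euclidean norm. Equivalently, with Φ(s) = e^{s²} − 1, the map a ↦ Φ(|a|) satisfies Φ(|a|) − Φ(|b|) − ⟨∇(Φ∘|·|)(b), a − b⟩ ≥ |a − b|², i.e., the exponential energy density is 2-strongly convex. -/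
open RealInnerProductSpace

/-- Pointwise 2-strong convexity of the exponential energy density: for all
`a, b ∈ ℝ^N`,
`e^{|a|²} − e^{|b|²} − 2e^{|b|²}⟨b, a − b⟩ ≥ |a − b|²`, i.e. with
`Φ(s) = e^{s²} − 1`, `Φ(|a|) − Φ(|b|) − ⟨∇(Φ∘|·|)(b), a − b⟩ ≥ |a − b|²`. -/
theorem exp_energy_strongly_convex (N : ℕ) (a b : EuclideanSpace ℝ (Fin N)) :
    ‖a - b‖ ^ 2 ≤
      Real.exp (‖a‖ ^ 2) - Real.exp (‖b‖ ^ 2) -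
        2 * Real.exp (‖b‖ ^ 2) * ⟪b, a - b⟫ := by
  set x := ‖a‖ ^ 2 with hx
  set y := ‖b‖ ^ 2 with hy
  have hab : ‖a - b‖ ^ 2 = x - 2 * ⟪a, b⟫ + y := by
    rw [hx, hy, @norm_sub_sq_real]
  have ht : ⟪b, a - b⟫ = ⟪a, b⟫ - y := by
    rw [inner_sub_right, real_inner_comm, hy, real_inner_self_eq_norm_sq]
  have hnn : (0:ℝ) ≤ ‖a - b‖ ^ 2 := sq_nonneg _
  have h1 : x - y + 1 ≤ Real.exp (x - y) := Real.add_one_le_exp (x - y)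
  have h2 : Real.exp x = Real.exp (x - y) * Real.exp y := by
    rw [← Real.exp_add]; ring_nf
  have h3 : (1:ℝ) ≤ Real.exp y := by
    rw [hy]; exact Real.one_le_exp (sq_nonneg _)
  have h4 : (0:ℝ) < Real.exp y := Real.exp_pos y
  rw [hab, ht]
  nlinarith [mul_le_mul_of_nonneg_right h1 h4.le,
    mul_nonneg (sub_nonneg.mpr h3) (by nlinarith : (0:ℝ) ≤ x - y - 2 * (⟪a, b⟫ - y))]
end
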